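/- Let q ≥ 2 be a natural number and K ≥ 0, L ≥ 0 real numbers. For all real numbers b, λ₁, …, λ_q with b² + Σᵢ λᵢ² = 1, one has 2·K·b·(Σᵢ λᵢ) + L·((Σᵢ λᵢ)² − Σᵢ λᵢ²) ≤ ((q−1)L + √(4qK² + (q−1)²L²))/2, and this bound is attained for some admissible choice of b, λ₁, …, λ_q. -/

import Mathlib

set_option maxHeartbeats 1000000 in
/-- Largest eigenvalue `Λ_Rm` of the curvature operator of a nonnegatively
curved warped product `ds² + u(s)·g_{S^q}` acting on unit symmetric 2-tensors:
`Rm[h,h] = 2Kb(Σλᵢ) + L((Σλᵢ)² − Σλᵢ²)` is bounded by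
`((q−1)L + √(4qK² + (q−1)²L²))/2` on the unit sphere `b² + Σλᵢ² = 1`,
and the bound is attained. -/
theorem lambda_Rm_warped (q : ℕ) (hq : 2 ≤ q) (K L : ℝ) (hK : 0 ≤ K) (hL : 0 ≤ L) :
    (∀ b : ℝ, ∀ lam : Fin q → ℝ, b ^ 2 + ∑ i, lam i ^ 2 = 1 →
      2 * K * b * (∑ i, lam i) + L * ((∑ i, lam i) ^ 2 - ∑ i, lam i ^ 2) ≤
        (((q : ℝ) - 1) * L +
          Real.sqrt (4 * (q : ℝ) * K ^ 2 + ((q : ℝ) - 1) ^ 2 * L ^ 2)) / 2) ∧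
    (∃ b : ℝ, ∃ lam : Fin q → ℝ, b ^ 2 + ∑ i, lam i ^ 2 = 1 ∧
      2 * K * b * (∑ i, lam i) + L * ((∑ i, lam i) ^ 2 - ∑ i, lam i ^ 2) =
        (((q : ℝ) - 1) * L +
          Real.sqrt (4 * (q : ℝ) * K ^ 2 + ((q : ℝ) - 1) ^ 2 * L ^ 2)) / 2) := by
  have hq1 : (1:ℝ) ≤ (q:ℝ) - 1 := by
    have : (2:ℝ) ≤ (q:ℝ) := by exact_mod_cast hq
    linarith
  have hq0 : (0:ℝ) < (q:ℝ) := by linarith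
  set R := Real.sqrt (4 * (q:ℝ) * K ^ 2 + ((q:ℝ) - 1) ^ 2 * L ^ 2) with hRdef
  clear_value R
  have hR2 : R ^ 2 = 4 * (q:ℝ) * K ^ 2 + ((q:ℝ) - 1) ^ 2 * L ^ 2 := by
    rw [hRdef]; exact Real.sq_sqrt (by positivity)
  have hRnn : 0 ≤ R := hRdef ▸ Real.sqrt_nonneg _
  set M := ((((q:ℝ) - 1)) * L + R) / 2 with hMdef
  clear_value M
  have hLM : ((q:ℝ)-1) * L ≤ R := by
    nlinarith [sq_nonneg (R - ((q:ℝ)-1)*L), mul_nonneg (by linarith : (0:ℝ) ≤ (q:ℝ)-1) hL,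
      sq_nonneg K]
  have hMnn : 0 ≤ M := by
    have := mul_nonneg (by linarith : (0:ℝ) ≤ (q:ℝ)-1) hL
    rw [hMdef]; linarith
  have hM2 : M ^ 2 = ((q:ℝ)-1) * L * M + (q:ℝ) * K ^ 2 := by
    rw [hMdef]; nlinarith [hR2]
  constructor
  · intro b lam hunit
    set S := ∑ i, lam i with hS
    set Q := ∑ i, lam i ^ 2 with hQ
    clear_value S Q
    have hCS : S ^ 2 ≤ (q:ℝ) * Q := by
      have := sq_sum_le_card_mul_sum_sq (s := Finset.univ) (f := lam)
      simpa [hS, hQ, Finset.card_univ] using this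
    have hQnn : 0 ≤ Q := by
      rw [hQ]; exact Finset.sum_nonneg fun i _ => sq_nonneg _
    rcases eq_or_lt_of_le hMnn with hM0 | hMpos
    · -- M = 0 : then K = 0, L = 0
      have hK0 : K = 0 := by nlinarith [hM2, hq0]
      have hL0 : L = 0 := by nlinarith [hLM, hMdef]
      rw [hK0, hL0]; nlinarith [hMnn]
    · have key : 0 ≤ (M * b - K * S) ^ 2 := sq_nonneg _
      have hA : 0 ≤ M * L * ((q:ℝ) * Q - S ^ 2) :=
        mul_nonneg (mul_nonneg hMnn hL) (by linarith)
      have hB : 0 ≤ K ^ 2 * ((q:ℝ) * Q - S ^ 2) :=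
        mul_nonneg (sq_nonneg K) (by linarith)
      have hM2Q : M ^ 2 * Q = ((q:ℝ)-1) * L * M * Q + (q:ℝ) * K ^ 2 * Q := by
        linear_combination Q * hM2
      have hunitM : M ^ 2 * b ^ 2 + M ^ 2 * Q = M ^ 2 := by
        linear_combination M ^ 2 * hunit
      have h1 : M * (2 * K * b * S + L * (S ^ 2 - Q)) ≤ M * M := by
        nlinarith [key, hA, hB, hM2Q, hunitM]
      have := le_of_mul_le_mul_left h1 hMpos
      linarith [this]
  · rcases eq_or_lt_of_le hMnn with hM0 | hMpos
    · have hK0 : K = 0 := by nlinarith [hM2, hq0]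
      have hL0 : L = 0 := by nlinarith [hLM, hMdef]
      refine ⟨1, fun _ => 0, by simp, ?_⟩
      rw [hK0, hL0]; simp; linarith [hM0]
    · set N := Real.sqrt ((q:ℝ) * K ^ 2 + M ^ 2) with hNdef
      clear_value N
      have hN2 : N ^ 2 = (q:ℝ) * K ^ 2 + M ^ 2 := by
        rw [hNdef]; exact Real.sq_sqrt (by positivity)
      have hNpos : 0 < N := by
        rw [hNdef]; apply Real.sqrt_pos.mpr; nlinarith [hMpos, sq_nonneg K]
      set sq := Real.sqrt (q:ℝ) with hsqdef
      clear_value sq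
      have hsq2 : sq ^ 2 = (q:ℝ) := by rw [hsqdef]; exact Real.sq_sqrt (le_of_lt hq0)
      have hsqpos : 0 < sq := by rw [hsqdef]; exact Real.sqrt_pos.mpr hq0
      refine ⟨sq * K / N, fun _ => M / (sq * N), ?_, ?_⟩
      · have hsum : ∑ _i : Fin q, (M / (sq * N)) ^ 2 = (q:ℝ) * (M / (sq * N)) ^ 2 := by
          simp [Finset.sum_const, Finset.card_univ, mul_comm]
        rw [hsum]
        field_simp
        linear_combination ((sq^2 + (q:ℝ))*K^2 - N^2) * hsq2 - (q:ℝ) * hN2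
      · have hsum : ∑ _i : Fin q, (M / (sq * N)) = (q:ℝ) * (M / (sq * N)) := by
          simp [Finset.sum_const, Finset.card_univ, mul_comm]
        have hsum2 : ∑ _i : Fin q, (M / (sq * N)) ^ 2 = (q:ℝ) * (M / (sq * N)) ^ 2 := by
          simp [Finset.sum_const, Finset.card_univ, mul_comm]
        rw [hsum, hsum2]
        field_simp
        linear_combination (2*(q:ℝ)*K^2 - N^2) * hsq2
          - (q:ℝ) * hN2 - (q:ℝ) * hM2
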